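/- Let L f = −f'' + f − 5Q⁴f where Q(x) = (3/cosh²(2x))^{1/4}. Then LQ' = 0 and LQ³ = −8Q³. -/

import Mathlib

open Real

private lemma c2pos (x : ℝ) : 0 < Real.cosh (2*x) := Real.cosh_pos _

private lemma hdc (x : ℝ) : HasDerivAt (fun x : ℝ => Real.cosh (2*x)) (2 * Real.sinh (2*x)) x := by
  have h : HasDerivAt (fun x : ℝ => 2*x) 2 x := by simpa using (hasDerivAt_id x).const_mul 2
  simpa [mul_comm] using h.cosh

private lemma hds (x : ℝ) : HasDerivAt (fun x : ℝ => Real.sinh (2*x)) (2 * Real.cosh (2*x)) x := by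
  have h : HasDerivAt (fun x : ℝ => 2*x) 2 x := by simpa using (hasDerivAt_id x).const_mul 2
  simpa [mul_comm] using h.sinh

private lemma hdp (p : ℝ) (x : ℝ) :
    HasDerivAt (fun x : ℝ => Real.cosh (2*x) ^ p)
      (2 * Real.sinh (2*x) * p * Real.cosh (2*x) ^ (p-1)) x :=
  (hdc x).rpow_const (Or.inl (c2pos x).ne')

/-- derivative of k * cosh(2x)^p -/
private lemma hdkp (k p : ℝ) (x : ℝ) :
    HasDerivAt (fun x : ℝ => k * Real.cosh (2*x) ^ p)
      (k * (2 * Real.sinh (2*x) * p * Real.cosh (2*x) ^ (p-1))) x :=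
  (hdp p x).const_mul k

/-- derivative of k * sinh(2x) * cosh(2x)^p -/
private lemma hdskp (k p : ℝ) (x : ℝ) :
    HasDerivAt (fun x : ℝ => k * Real.sinh (2*x) * Real.cosh (2*x) ^ p)
      ((k * (2 * Real.cosh (2*x))) * Real.cosh (2*x) ^ p
        + (k * Real.sinh (2*x)) * (2 * Real.sinh (2*x) * p * Real.cosh (2*x) ^ (p-1))) x :=
  ((hds x).const_mul k).mul (hdp p x)

/-- rpow addition for cosh -/
private lemma rpadd (x p q : ℝ) :
    Real.cosh (2*x) ^ p * Real.cosh (2*x) ^ q = Real.cosh (2*x) ^ (p+q) :=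
  (Real.rpow_add (c2pos x) p q).symm

private lemma rpnat (x p : ℝ) (n : ℕ) :
    (Real.cosh (2*x) ^ p) ^ n = Real.cosh (2*x) ^ (p * n) := by
  rw [← Real.rpow_natCast (Real.cosh (2*x) ^ p) n, ← Real.rpow_mul (c2pos x).le]

theorem stmt_7 (Q : ℝ → ℝ)
    (hQ : ∀ x, Q x = (3 / Real.cosh (2 * x) ^ 2) ^ ((1 : ℝ) / 4)) :
    (∀ x, -(deriv (deriv (deriv Q)) x) + deriv Q x - 5 * Q x ^ 4 * deriv Q x = 0) ∧
    (∀ x, -(deriv (deriv (fun y => Q y ^ 3)) x) + Q x ^ 3 - 5 * Q x ^ 4 * Q x ^ 3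
      = -8 * Q x ^ 3) := by
  set a : ℝ := (3:ℝ) ^ ((1:ℝ)/4) with ha
  have ha4 : a ^ 4 = 3 := by
    rw [ha, ← Real.rpow_natCast ((3:ℝ) ^ ((1:ℝ)/4)) 4, ← Real.rpow_mul (by norm_num)]
    norm_num
  have hQfun : Q = fun x => a * Real.cosh (2*x) ^ (-(1:ℝ)/2) := by
    funext x
    rw [hQ x]
    have hc := c2pos x
    rw [Real.div_rpow (by norm_num) (by positivity),
      ← Real.rpow_natCast (Real.cosh (2*x)) 2, ← Real.rpow_mul hc.le,
      div_eq_mul_inv, ← Real.rpow_neg hc.le]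
    norm_num
    exact Or.inl ha.symm
  -- first derivative
  have e1 : deriv Q = fun x => -a * Real.sinh (2*x) * Real.cosh (2*x) ^ (-(3:ℝ)/2) := by
    funext x
    rw [hQfun]
    refine HasDerivAt.deriv ?_
    have h := hdkp a (-(1:ℝ)/2) x
    refine h.congr_deriv (Eq.symm ?_)
    have : (-(1:ℝ)/2 - 1) = (-(3:ℝ)/2) := by norm_num
    rw [this]; ring
  -- second derivative
  have e2 : deriv (fun x => -a * Real.sinh (2*x) * Real.cosh (2*x) ^ (-(3:ℝ)/2))
      = fun x => a * Real.cosh (2*x) ^ (-(1:ℝ)/2) - 3*a * Real.cosh (2*x) ^ (-(5:ℝ)/2) := by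
    funext x
    refine HasDerivAt.deriv ?_
    have h := hdskp (-a) (-(3:ℝ)/2) x
    refine h.congr_deriv (Eq.symm ?_)
    have h1 : (-(3:ℝ)/2 - 1) = (-(5:ℝ)/2) := by norm_num
    rw [h1]
    have hs : Real.sinh (2*x) ^ 2 = Real.cosh (2*x) ^ 2 - 1 := by
      have := Real.cosh_sq_sub_sinh_sq (2*x); linarith
    have hc1 : Real.cosh (2*x) * Real.cosh (2*x) ^ (-(3:ℝ)/2)
        = Real.cosh (2*x) ^ (-(1:ℝ)/2) := by
      nth_rewrite 1 [← Real.rpow_one (Real.cosh (2*x))]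
      rw [rpadd]; norm_num
    have hc2 : Real.cosh (2*x) ^ 2 * Real.cosh (2*x) ^ (-(5:ℝ)/2)
        = Real.cosh (2*x) ^ (-(1:ℝ)/2) := by
      rw [← Real.rpow_natCast (Real.cosh (2*x)) 2, rpadd]; norm_num
    linear_combination (2*a) * hc1 + (-3*a) * hc2
      + (-3*a*Real.cosh (2*x) ^ (-(5:ℝ)/2)) * hs
  -- third derivative
  have e3 : deriv (fun x => a * Real.cosh (2*x) ^ (-(1:ℝ)/2) - 3*a * Real.cosh (2*x) ^ (-(5:ℝ)/2))
      = fun x => -a * Real.sinh (2*x) * Real.cosh (2*x) ^ (-(3:ℝ)/2)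
          + 15*a * Real.sinh (2*x) * Real.cosh (2*x) ^ (-(7:ℝ)/2) := by
    funext x
    refine HasDerivAt.deriv ?_
    have h := (hdkp a (-(1:ℝ)/2) x).sub (hdkp (3*a) (-(5:ℝ)/2) x)
    refine h.congr_deriv (Eq.symm ?_)
    have h1 : (-(1:ℝ)/2 - 1) = (-(3:ℝ)/2) := by norm_num
    have h2 : (-(5:ℝ)/2 - 1) = (-(7:ℝ)/2) := by norm_num
    rw [h1, h2]; ring
  -- powers of Q
  have hQ4 : ∀ x, Q x ^ 4 = 3 * Real.cosh (2*x) ^ (-(2:ℝ)) := by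
    intro x
    rw [hQfun]
    simp only [mul_pow, rpnat, ha4]
    norm_num
  have hQ3 : ∀ x, Q x ^ 3 = a^3 * Real.cosh (2*x) ^ (-(3:ℝ)/2) := by
    intro x
    rw [hQfun]
    simp only [mul_pow, rpnat]
    norm_num
  constructor
  · intro x
    rw [e1, e2, e3, hQ4]
    have hc : Real.cosh (2*x) ^ (-(2:ℝ)) * Real.cosh (2*x) ^ (-(3:ℝ)/2)
        = Real.cosh (2*x) ^ (-(7:ℝ)/2) := by rw [rpadd]; norm_num
    beta_reduce
    linear_combination (15*a*Real.sinh (2*x)) * hc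
  · intro x
    have hQ3fun : (fun y => Q y ^ 3) = fun y => a^3 * Real.cosh (2*y) ^ (-(3:ℝ)/2) :=
      funext fun y => hQ3 y
    rw [hQ3fun]
    -- first derivative of Q^3
    have f1 : deriv (fun y => a^3 * Real.cosh (2*y) ^ (-(3:ℝ)/2))
        = fun y => -3*a^3 * Real.sinh (2*y) * Real.cosh (2*y) ^ (-(5:ℝ)/2) := by
      funext y
      refine HasDerivAt.deriv ?_
      have h := hdkp (a^3) (-(3:ℝ)/2) y
      refine h.congr_deriv (Eq.symm ?_)
      have h1 : (-(3:ℝ)/2 - 1) = (-(5:ℝ)/2) := by norm_num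
      rw [h1]; ring
    have f2 : deriv (fun y => -3*a^3 * Real.sinh (2*y) * Real.cosh (2*y) ^ (-(5:ℝ)/2))
        = fun y => 9*a^3 * Real.cosh (2*y) ^ (-(3:ℝ)/2) - 15*a^3 * Real.cosh (2*y) ^ (-(7:ℝ)/2) := by
      funext y
      refine HasDerivAt.deriv ?_
      have h := hdskp (-3*a^3) (-(5:ℝ)/2) y
      refine h.congr_deriv (Eq.symm ?_)
      have h1 : (-(5:ℝ)/2 - 1) = (-(7:ℝ)/2) := by norm_num
      rw [h1]
      have hs : Real.sinh (2*y) ^ 2 = Real.cosh (2*y) ^ 2 - 1 := by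
        have := Real.cosh_sq_sub_sinh_sq (2*y); linarith
      have hc1 : Real.cosh (2*y) * Real.cosh (2*y) ^ (-(5:ℝ)/2)
          = Real.cosh (2*y) ^ (-(3:ℝ)/2) := by
        nth_rewrite 1 [← Real.rpow_one (Real.cosh (2*y))]
        rw [rpadd]; norm_num
      have hc2 : Real.cosh (2*y) ^ 2 * Real.cosh (2*y) ^ (-(7:ℝ)/2)
          = Real.cosh (2*y) ^ (-(3:ℝ)/2) := by
        rw [← Real.rpow_natCast (Real.cosh (2*y)) 2, rpadd]; norm_num
      linear_combination (6*a^3) * hc1 + (-15*a^3) * hc2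
        + (-15*a^3*Real.cosh (2*y) ^ (-(7:ℝ)/2)) * hs
    rw [f1, f2, hQ4, hQ3]
    have hc : Real.cosh (2*x) ^ (-(2:ℝ)) * Real.cosh (2*x) ^ (-(3:ℝ)/2)
        = Real.cosh (2*x) ^ (-(7:ℝ)/2) := by rw [rpadd]; norm_num
    beta_reduce
    linear_combination (-15*a^3) * hc
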